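/- Let r > 0, let n ≥ 1 be an integer, and let X_1,…,X_n be nonempty compact metric spaces with diam X_k ≤ r for every k. Then there exists a compact (r,n)-stacked space over X_1,…,X_n, and every (r,n)-stacked space over X_1,…,X_n has diameter exactly 5rn. -/

import Mathlib

open GromovHausdorff

universe u v

/-- `Z` (with two distinguished points `p true = p¹` and `p false = p⁻¹`, and pieces
`P 0, …, P (n-1)`, where `P k` plays the role of `Z_{k+1}`) is an `(r,n)`-stacked space
over the nonempty compact metric spaces `X 0, …, X (n-1)` (each of diameter at most `r`):
* `dist p¹ p⁻¹ = 3r`;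
* the pieces are pairwise disjoint and do not contain `p¹`, `p⁻¹`;
* `{p¹, p⁻¹}` together with the pieces cover `Z`;
* the piece `P k` with the induced metric is isometric to `X k`;
* `dist (p^s) z = 5r(k+1)` for every `z ∈ P k` and both `s`;
* `dist z w = 5r|k - l|` for `z ∈ P k`, `w ∈ P l` with `k ≠ l`. -/
def IsStackedSpace (r : ℝ) {n : ℕ} (X : Fin n → Type u) [∀ k, MetricSpace (X k)]
    (Z : Type v) [MetricSpace Z] (p : Bool → Z) (P : Fin n → Set Z) : Prop :=
  dist (p true) (p false) = 3 * r ∧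
  (Pairwise fun k l : Fin n => Disjoint (P k) (P l)) ∧
  (∀ (k : Fin n) (s : Bool), p s ∉ P k) ∧
  ({p true, p false} ∪ ⋃ k, P k) = Set.univ ∧
  (∀ k : Fin n, Nonempty (X k ≃ᵢ (P k : Set Z))) ∧
  (∀ (k : Fin n) (s : Bool), ∀ z ∈ P k, dist (p s) z = 5 * r * ((k : ℕ) + 1)) ∧
  (∀ k l : Fin n, k ≠ l → ∀ z ∈ P k, ∀ w ∈ P l,
    dist z w = 5 * r * |((k : ℕ) : ℝ) - ((l : ℕ) : ℝ)|)

namespace StackedAux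

variable {n : ℕ} {X : Fin n → Type u} [∀ k, MetricSpace (X k)]

/-- The distance on `Bool ⊕ Σ k, X k`. -/
noncomputable def sdist (r : ℝ) : (Bool ⊕ (Σ k, X k)) → (Bool ⊕ (Σ k, X k)) → ℝ
  | .inl s, .inl t => if s = t then 0 else 3 * r
  | .inl _, .inr z => 5 * r * ((z.1 : ℕ) + 1)
  | .inr z, .inl _ => 5 * r * ((z.1 : ℕ) + 1)
  | .inr z, .inr w =>
      if h : z.1 = w.1 then dist (h ▸ z.2) w.2
      else 5 * r * |((z.1 : ℕ) : ℝ) - ((w.1 : ℕ) : ℝ)|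

variable {r : ℝ}

@[simp] lemma sdist_inr_same (k : Fin n) (x y : X k) :
    sdist (X := X) r (.inr ⟨k, x⟩) (.inr ⟨k, y⟩) = dist x y := by
  simp [sdist]

lemma sdist_inr_ne {k l : Fin n} (h : k ≠ l) (x : X k) (y : X l) :
    sdist (X := X) r (.inr ⟨k, x⟩) (.inr ⟨l, y⟩) = 5 * r * |((k:ℕ):ℝ) - ((l:ℕ):ℝ)| := by
  simp [sdist, h]

lemma one_le_abs_cast {k l : Fin n} (h : k ≠ l) :
    (1:ℝ) ≤ |((k : ℕ) : ℝ) - ((l : ℕ) : ℝ)| := by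
  have hne : (k : ℕ) ≠ (l : ℕ) := fun hc => h (Fin.ext hc)
  rcases lt_or_gt_of_ne hne with h' | h'
  · have h1 : ((k : ℕ) : ℝ) + 1 ≤ ((l : ℕ) : ℝ) := by exact_mod_cast h'
    rw [abs_sub_comm, abs_of_nonneg (by linarith)]
    linarith
  · have h1 : ((l : ℕ) : ℝ) + 1 ≤ ((k : ℕ) : ℝ) := by exact_mod_cast h'
    rw [abs_of_nonneg (by linarith)]
    linarith


lemma sdist_self (a : Bool ⊕ (Σ k, X k)) : sdist (X := X) r a a = 0 := by
  cases a with
  | inl s => simp [sdist]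
  | inr z => simp [sdist]

lemma sdist_comm (a b : Bool ⊕ (Σ k, X k)) : sdist (X := X) r a b = sdist r b a := by
  cases a with
  | inl s =>
    cases b with
    | inl t => simp [sdist, eq_comm]
    | inr z => simp [sdist]
  | inr z =>
    cases b with
    | inl t => simp [sdist]
    | inr w =>
      obtain ⟨k, x⟩ := z; obtain ⟨l, y⟩ := w
      rcases eq_or_ne k l with h | h
      · subst h; simp [sdist, dist_comm]
      · simp [sdist, h, h.symm, abs_sub_comm]

lemma sdist_triangle (hr : 0 < r) (hd : ∀ (k : Fin n) (x y : X k), dist x y ≤ r)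
    (a b c : Bool ⊕ (Σ k, X k)) :
    sdist (X := X) r a c ≤ sdist r a b + sdist r b c := by
  have habs : ∀ u v : ℝ, |u - v| ≤ |u| + |v| := fun u v => abs_sub u v
  cases a with
  | inl s =>
    cases c with
    | inl t =>
      cases b with
      | inl q =>
        simp only [sdist]
        split_ifs <;> simp_all <;> linarith
      | inr z =>
        have : (0:ℝ) ≤ (z.1 : ℕ) := Nat.cast_nonneg _
        simp only [sdist]
        split_ifs <;> nlinarith
    | inr w =>
      cases b with
      | inl q =>
        simp only [sdist]
        split_ifs <;> nlinarith [Nat.cast_nonneg (α := ℝ) (w.1 : ℕ)]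
      | inr z =>
        simp only [sdist]
        rcases eq_or_ne z.1 w.1 with h | h
        · rw [dif_pos h]
          have := dist_nonneg (x := h ▸ z.2) (y := w.2)
          have hkl : ((z.1 : ℕ) : ℝ) = ((w.1 : ℕ) : ℝ) := by exact_mod_cast congrArg (fun k : Fin n => (k : ℕ)) h
          rw [hkl]; linarith
        · rw [dif_neg h]
          rcases abs_cases (((z.1 : ℕ) : ℝ) - ((w.1 : ℕ) : ℝ)) with ⟨he, _⟩ | ⟨he, _⟩ <;>
            nlinarith [Nat.cast_nonneg (α := ℝ) (z.1 : ℕ), Nat.cast_nonneg (α := ℝ) (w.1 : ℕ)]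
  | inr z =>
    cases c with
    | inl t =>
      cases b with
      | inl q =>
        simp only [sdist]
        split_ifs <;> nlinarith [Nat.cast_nonneg (α := ℝ) (z.1 : ℕ)]
      | inr w =>
        simp only [sdist]
        rcases eq_or_ne z.1 w.1 with h | h
        · rw [dif_pos h]
          have := dist_nonneg (x := h ▸ z.2) (y := w.2)
          have hkl : ((z.1 : ℕ) : ℝ) = ((w.1 : ℕ) : ℝ) := by exact_mod_cast congrArg (fun k : Fin n => (k : ℕ)) h
          rw [hkl]; linarith
        · rw [dif_neg h]
          rcases abs_cases (((z.1 : ℕ) : ℝ) - ((w.1 : ℕ) : ℝ)) with ⟨he, _⟩ | ⟨he, _⟩ <;>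
            nlinarith [Nat.cast_nonneg (α := ℝ) (z.1 : ℕ), Nat.cast_nonneg (α := ℝ) (w.1 : ℕ)]
    | inr w =>
      cases b with
      | inl q =>
        -- z, inl, w
        simp only [sdist]
        rcases eq_or_ne z.1 w.1 with h | h
        · rw [dif_pos h]
          have hb := hd w.1 (h ▸ z.2) w.2
          have hkl : ((z.1 : ℕ) : ℝ) = ((w.1 : ℕ) : ℝ) := by exact_mod_cast congrArg (fun k : Fin n => (k : ℕ)) h
          nlinarith [Nat.cast_nonneg (α := ℝ) (z.1 : ℕ), Nat.cast_nonneg (α := ℝ) (w.1 : ℕ)]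
        · rw [dif_neg h]
          rcases abs_cases (((z.1 : ℕ) : ℝ) - ((w.1 : ℕ) : ℝ)) with ⟨he, _⟩ | ⟨he, _⟩ <;>
            nlinarith [Nat.cast_nonneg (α := ℝ) (z.1 : ℕ), Nat.cast_nonneg (α := ℝ) (w.1 : ℕ)]
      | inr v =>
        obtain ⟨k, x⟩ := z; obtain ⟨l, y⟩ := w; obtain ⟨m, u⟩ := v
        rcases eq_or_ne k l with h1 | h1
        · cases h1
          rcases eq_or_ne (k : Fin n) m with h2 | h2
          · cases h2
            rw [sdist_inr_same, sdist_inr_same, sdist_inr_same]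
            exact dist_triangle x u y
          · rw [sdist_inr_same, sdist_inr_ne h2, sdist_inr_ne (Ne.symm h2)]
            have hb := hd k x y
            have h1' := one_le_abs_cast (n := n) h2
            have h1'' := one_le_abs_cast (n := n) (Ne.symm h2)
            nlinarith
        · rcases eq_or_ne (k : Fin n) m with h2 | h2
          · cases h2
            rw [sdist_inr_ne h1, sdist_inr_same, sdist_inr_ne h1]
            have := dist_nonneg (x := x) (y := u)
            linarith
          · rcases eq_or_ne (m : Fin n) l with h3 | h3
            · cases h3
              rw [sdist_inr_ne h1, sdist_inr_ne h2, sdist_inr_same]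
              have := dist_nonneg (x := u) (y := y)
              linarith
            · rw [sdist_inr_ne h1, sdist_inr_ne h2, sdist_inr_ne h3]
              have := abs_sub_le ((k:ℕ):ℝ) ((m:ℕ):ℝ) ((l:ℕ):ℝ)
              nlinarith [abs_nonneg (((k:ℕ):ℝ) - ((m:ℕ):ℝ)), abs_nonneg (((m:ℕ):ℝ) - ((l:ℕ):ℝ))]

lemma sdist_eq_zero (hr : 0 < r) {a b : Bool ⊕ (Σ k, X k)}
    (hab : sdist (X := X) r a b = 0) : a = b := by
    cases a with
    | inl s =>
      cases b with
      | inl t =>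
        rcases eq_or_ne s t with h | h
        · rw [h]
        · rw [show sdist (X := X) r (.inl s) (.inl t) = if s = t then 0 else 3 * r from rfl,
            if_neg h] at hab
          linarith
      | inr z =>
        exfalso
        have h0 : (0:ℝ) ≤ ((z.1 : ℕ) : ℝ) := Nat.cast_nonneg _
        have : sdist (X := X) r (.inl s) (.inr z) = 5 * r * ((z.1 : ℕ) + 1) := rfl
        rw [this] at hab
        nlinarith
    | inr z =>
      cases b with
      | inl t =>
        exfalso
        have h0 : (0:ℝ) ≤ ((z.1 : ℕ) : ℝ) := Nat.cast_nonneg _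
        have : sdist (X := X) r (.inr z) (.inl t) = 5 * r * ((z.1 : ℕ) + 1) := rfl
        rw [this] at hab
        nlinarith
      | inr w =>
        obtain ⟨k, x⟩ := z; obtain ⟨l, y⟩ := w
        rcases eq_or_ne k l with h | h
        · cases h
          rw [sdist_inr_same] at hab
          rw [eq_of_dist_eq_zero hab]
        · exfalso
          rw [sdist_inr_ne h] at hab
          have := one_le_abs_cast (n := n) h
          nlinarith

/-- Type synonym to avoid instance clashes with the sum topology. -/
def Space (X : Fin n → Type u) : Type u := Bool ⊕ (Σ k, X k)

/-- The two distinguished points. -/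
def Space.pt (s : Bool) : Space X := Sum.inl s

/-- The inclusion of the pieces. -/
def Space.piece (k : Fin n) (x : X k) : Space X := Sum.inr ⟨k, x⟩

lemma Space.cases (z : Space X) :
    (∃ s : Bool, z = Space.pt s) ∨ ∃ w : Σ k, X k, z = Space.piece w.1 w.2 := by
  rcases z with s | ⟨k, x⟩
  · exact Or.inl ⟨s, rfl⟩
  · exact Or.inr ⟨⟨k, x⟩, rfl⟩

lemma Space.piece_inj {k l : Fin n} {x : X k} {y : X l}
    (h : Space.piece k x = Space.piece l y) : k = l := by
  have h' : (Sum.inr ⟨k, x⟩ : Bool ⊕ (Σ k, X k)) = Sum.inr ⟨l, y⟩ := h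
  have := Sum.inr.inj h'
  exact congrArg Sigma.fst this

lemma Space.pt_ne_piece (s : Bool) (k : Fin n) (x : X k) :
    Space.pt (X := X) s ≠ Space.piece k x := by
  intro h
  have h' : (Sum.inl s : Bool ⊕ (Σ k, X k)) = Sum.inr ⟨k, x⟩ := h
  exact Sum.inl_ne_inr h'

noncomputable def metric (r : ℝ) (hr : 0 < r)
    (hd : ∀ (k : Fin n) (x y : X k), dist x y ≤ r) :
    MetricSpace (Space X) where
  dist := sdist r
  dist_self := sdist_self
  dist_comm := sdist_comm
  dist_triangle := sdist_triangle hr hd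
  eq_of_dist_eq_zero := fun {a b} hab => sdist_eq_zero hr hab

end StackedAux

open StackedAux in
lemma stacked_diam_eq (r : ℝ) (hr : 0 < r) {n : ℕ} (hn : 1 ≤ n)
    (X : Fin n → Type u) [∀ k, MetricSpace (X k)] [∀ k, CompactSpace (X k)]
    [∀ k, Nonempty (X k)]
    (hdiam : ∀ k, Metric.diam (Set.univ : Set (X k)) ≤ r)
    (Z : Type v) [MetricSpace Z] (p : Bool → Z) (P : Fin n → Set Z)
    (h : IsStackedSpace r X Z p P) :
    Metric.diam (Set.univ : Set Z) = 5 * r * n := by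
  obtain ⟨h1, h2, h3, h4, h5, h6, h7⟩ := h
  have hrn : 5 * r ≤ 5 * r * n := by
    nlinarith [(Nat.one_le_cast (α := ℝ)).2 hn]
  have hmem : ∀ z : Z, z = p true ∨ z = p false ∨ ∃ k, z ∈ P k := by
    intro z
    have hz : z ∈ ({p true, p false} ∪ ⋃ k, P k : Set Z) := h4 ▸ Set.mem_univ z
    simpa [Set.mem_iUnion, or_assoc] using hz
  have hXr : ∀ (k : Fin n) (x y : X k), dist x y ≤ r := fun k x y =>
    le_trans (Metric.dist_le_diam_of_mem isCompact_univ.isBounded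
      (Set.mem_univ x) (Set.mem_univ y)) (hdiam k)
  have hk1 : ∀ k : Fin n, ((k : ℕ) : ℝ) + 1 ≤ (n : ℝ) := by
    intro k
    exact_mod_cast Nat.succ_le_of_lt k.isLt
  have hps : ∀ (s : Bool) (w : Z), dist (p s) w ≤ 5 * r * n := by
    intro s w
    rcases hmem w with rfl | rfl | ⟨l, hl⟩
    · rcases s with _ | _
      · rw [dist_comm, h1]; linarith
      · simp; positivity
    · rcases s with _ | _
      · simp; positivity
      · rw [h1]; linarith
    · rw [h6 l s w hl]
      have := hk1 l
      nlinarith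
  have key : ∀ z w : Z, dist z w ≤ 5 * r * n := by
    intro z w
    rcases hmem z with rfl | rfl | ⟨k, hk⟩
    · exact hps true w
    · exact hps false w
    · rcases hmem w with rfl | rfl | ⟨l, hl⟩
      · rw [dist_comm]; exact hps true _
      · rw [dist_comm]; exact hps false _
      · rcases eq_or_ne k l with rfl | hne
        · obtain ⟨e⟩ := h5 k
          have : dist z w = dist (e.symm ⟨z, hk⟩) (e.symm ⟨w, hl⟩) := by
            rw [e.symm.dist_eq]
            rfl
          rw [this]
          have := hXr k (e.symm ⟨z, hk⟩) (e.symm ⟨w, hl⟩)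
          linarith
        · rw [h7 k l hne z hk w hl]
          have h1k := hk1 k
          have h1l := hk1 l
          have h0k : (0:ℝ) ≤ ((k : ℕ) : ℝ) := Nat.cast_nonneg _
          have h0l : (0:ℝ) ≤ ((l : ℕ) : ℝ) := Nat.cast_nonneg _
          rcases abs_cases (((k : ℕ) : ℝ) - ((l : ℕ) : ℝ)) with ⟨he, _⟩ | ⟨he, _⟩ <;>
            nlinarith
  have hbdd : Bornology.IsBounded (Set.univ : Set Z) :=
    Metric.isBounded_iff.2 ⟨5 * r * n, fun {x} _ {y} _ => key x y⟩
  refine le_antisymm (Metric.diam_le_of_forall_dist_le (by positivity)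
    (fun x _ y _ => key x y)) ?_
  set k₀ : Fin n := ⟨n - 1, by omega⟩ with hk₀
  obtain ⟨e⟩ := h5 k₀
  obtain ⟨x⟩ : Nonempty (X k₀) := inferInstance
  have hz : ((e x : P k₀) : Z) ∈ P k₀ := (e x).2
  have h6' := h6 k₀ true _ hz
  have hcast : ((k₀ : ℕ) : ℝ) + 1 = (n : ℝ) := by
    have hh : (n - 1 : ℕ) + 1 = n := by omega
    show ((n - 1 : ℕ) : ℝ) + 1 = ((n : ℕ) : ℝ)
    exact_mod_cast hh
  calc 5 * r * (n : ℝ) = dist (p true) ((e x : P k₀) : Z) := by rw [h6', hcast]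
    _ ≤ Metric.diam (Set.univ : Set Z) :=
        Metric.dist_le_diam_of_mem hbdd (Set.mem_univ _) (Set.mem_univ _)

/-- For `r > 0`, `n ≥ 1` and nonempty compact metric spaces
`X 0, …, X (n-1)` of diameter at most `r`, there exists a compact `(r,n)`-stacked space
over them, and every `(r,n)`-stacked space over them has diameter exactly `5rn`. -/
theorem exists_stackedSpace_and_diam_eq (r : ℝ) (hr : 0 < r) (n : ℕ) (hn : 1 ≤ n)
    (X : Fin n → Type u) [∀ k, MetricSpace (X k)] [∀ k, CompactSpace (X k)]
    [∀ k, Nonempty (X k)]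
    (hdiam : ∀ k, Metric.diam (Set.univ : Set (X k)) ≤ r) :
    (∃ (Z : Type u) (mZ : MetricSpace Z) (p : Bool → Z) (P : Fin n → Set Z),
      letI := mZ
      CompactSpace Z ∧ IsStackedSpace r X Z p P) ∧
    (∀ (Z : Type v) (mZ : MetricSpace Z) (p : Bool → Z) (P : Fin n → Set Z),
      letI := mZ
      IsStackedSpace r X Z p P → Metric.diam (Set.univ : Set Z) = 5 * r * n) := by
  constructor
  · -- existence
    classical
    have hd : ∀ (k : Fin n) (x y : X k), dist x y ≤ r := fun k x y =>
      le_trans (Metric.dist_le_diam_of_mem isCompact_univ.isBounded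
        (Set.mem_univ x) (Set.mem_univ y)) (hdiam k)
    letI mZ := StackedAux.metric (X := X) r hr hd
    have hdist_eq : ∀ (k : Fin n) (x y : X k),
        dist (StackedAux.Space.piece k x) (StackedAux.Space.piece k y) = dist x y :=
      fun k x y => StackedAux.sdist_inr_same (r := r) k x y
    have hiso : ∀ k : Fin n, Isometry (fun x : X k => StackedAux.Space.piece k x) :=
      fun k => Isometry.of_dist_eq (fun x y => hdist_eq k x y)
    refine ⟨StackedAux.Space X, mZ, StackedAux.Space.pt,
      fun k => Set.range (fun x : X k => StackedAux.Space.piece k x), ?_, ?_⟩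
    · -- compactness
      refine { isCompact_univ := ?_ }
      have huniv : (Set.univ : Set (StackedAux.Space X)) =
          ({StackedAux.Space.pt true, StackedAux.Space.pt false} : Set (StackedAux.Space X)) ∪
            ⋃ k, Set.range (fun x : X k => StackedAux.Space.piece k x) := by
        ext z
        simp only [Set.mem_univ, true_iff, Set.mem_union, Set.mem_insert_iff,
          Set.mem_singleton_iff, Set.mem_iUnion, Set.mem_range]
        rcases StackedAux.Space.cases z with ⟨s, rfl⟩ | ⟨w, rfl⟩
        · cases s <;> simp
        · exact Or.inr ⟨w.1, w.2, rfl⟩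
      rw [huniv]
      exact ((isCompact_singleton.union isCompact_singleton).union
        (isCompact_iUnion fun k => isCompact_range (hiso k).continuous))
    · refine ⟨?_, ?_, ?_, ?_, ?_, ?_, ?_⟩
      · show StackedAux.sdist (X := X) r (Sum.inl true) (Sum.inl false) = 3 * r
        simp [StackedAux.sdist]
      · intro k l hkl
        rw [Set.disjoint_left]
        rintro z ⟨x, rfl⟩ ⟨y, hy⟩
        exact hkl (StackedAux.Space.piece_inj hy).symm
      · rintro k s ⟨x, hx⟩
        exact StackedAux.Space.pt_ne_piece s k x hx.symm
      · ext z
        simp only [Set.mem_univ, iff_true, Set.mem_union, Set.mem_insert_iff,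
          Set.mem_singleton_iff, Set.mem_iUnion, Set.mem_range]
        rcases StackedAux.Space.cases z with ⟨s, rfl⟩ | ⟨w, rfl⟩
        · cases s <;> simp
        · exact Or.inr ⟨w.1, w.2, rfl⟩
      · exact fun k => ⟨(hiso k).isometryEquivOnRange⟩
      · rintro k s z ⟨x, rfl⟩
        show StackedAux.sdist (X := X) r (Sum.inl s) (Sum.inr ⟨k, x⟩) = 5 * r * ((k : ℕ) + 1)
        rfl
      · rintro k l hkl z ⟨x, rfl⟩ w ⟨y, rfl⟩
        exact StackedAux.sdist_inr_ne hkl x y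
  · intro Z mZ p P h
    exact stacked_diam_eq r hr hn X hdiam Z p P h
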